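/- Let λ > 0 and k be a positive integer. Then ∫_ℝ l · (1/Γ(k)) λ^k (exp(l))^k exp(−λ exp(l)) dl = ψ(k) − log λ, where ψ is the digamma function ψ(z) = Γ'(z)/Γ(z). Equivalently, if U is an Erlang(k, λ) random variable, then E[log U] = ψ(k) − log λ. -/

import Mathlib

open MeasureTheory Set Real Filter

/-- The digamma function `ψ = Γ'/Γ`. -/
noncomputable def digamma (z : ℝ) : ℝ := deriv Real.Gamma z / Real.Gamma z

/-- Integrability of the log-weighted Gamma integrand (complex version). -/
lemma cplxLogGammaIntegrable {s : ℂ} (hs : 0 < s.re) :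
    IntegrableOn (fun t : ℝ => (t : ℂ) ^ (s - 1) * (Real.log t * Real.exp (-t))) (Ioi 0) := by
  have h := (mellin_hasDerivAt_of_isBigO_rpow (E := ℂ) (a := s.re + 1) (b := 0)
      (f := fun x => (Real.exp (-x) : ℂ)) (s := s) ?_ ?_ (lt_add_one _) ?_ hs).1
  · refine h.congr_fun (fun t ht => ?_) measurableSet_Ioi
    simp only [smul_eq_mul, Complex.real_smul, Complex.ofReal_mul]
  · refine (Continuous.continuousOn ?_).locallyIntegrableOn measurableSet_Ioi
    exact Complex.continuous_ofReal.comp (Real.continuous_exp.comp continuous_neg)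
  · rw [← Asymptotics.isBigO_norm_left]
    simp_rw [Complex.norm_real,
      Asymptotics.isBigO_norm_left]
    simpa only [neg_one_mul] using
      (isLittleO_exp_neg_mul_rpow_atTop zero_lt_one _).isBigO
  · simp_rw [neg_zero, Real.rpow_zero]
    refine Asymptotics.isBigO_const_of_tendsto (?_ : Tendsto _ _ (nhds (1 : ℂ))) one_ne_zero
    rw [(by simp : (1 : ℂ) = Real.exp (-0))]
    exact (Complex.continuous_ofReal.comp
      (Real.continuous_exp.comp continuous_neg)).continuousWithinAt

lemma cplx_eq_ofReal {x : ℝ} (hx : 0 < x) {t : ℝ} (ht : t ∈ Ioi (0:ℝ)) :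
    (t : ℂ) ^ ((x : ℂ) - 1) * (Real.log t * Real.exp (-t))
      = ((t ^ (x - 1) * (Real.log t * Real.exp (-t)) : ℝ) : ℂ) := by
  rw [show ((x : ℂ) - 1) = ((x - 1 : ℝ) : ℂ) by push_cast; ring,
    ← Complex.ofReal_cpow ht.out.le]
  push_cast
  ring

lemma realLogGammaIntegrable {x : ℝ} (hx : 0 < x) :
    IntegrableOn (fun t : ℝ => t ^ (x - 1) * (Real.log t * Real.exp (-t))) (Ioi 0) := by
  have h := (cplxLogGammaIntegrable (s := (x : ℂ)) (by simpa using hx)).re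
  refine IntegrableOn.congr_fun h (fun t ht => ?_) measurableSet_Ioi
  simp only [RCLike.re_to_complex, cplx_eq_ofReal hx ht, Complex.ofReal_re]

lemma hasDerivAt_realGamma {x : ℝ} (hx : 0 < x) :
    HasDerivAt Real.Gamma
      (∫ t in Ioi (0:ℝ), t ^ (x - 1) * (Real.log t * Real.exp (-t))) x := by
  have h0 : 0 < (x : ℂ).re := by simpa using hx
  have h1 : HasDerivAt Complex.Gamma
      (∫ t in Ioi (0:ℝ), (t : ℂ) ^ ((x : ℂ) - 1) * (Real.log t * Real.exp (-t))) x := by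
    refine (Complex.hasDerivAt_GammaIntegral h0).congr_of_eventuallyEq ?_
    have hev : ∀ᶠ z : ℂ in nhds (x : ℂ), 0 < z.re :=
      (Complex.continuous_re.tendsto _).eventually (eventually_gt_nhds h0)
    filter_upwards [hev] with z hz using Complex.Gamma_eq_integral hz
  have h2 := h1.real_of_complex
  have h3 : (∫ t in Ioi (0:ℝ), (t : ℂ) ^ ((x : ℂ) - 1) * (Real.log t * Real.exp (-t)))
      = ((∫ t in Ioi (0:ℝ), t ^ (x - 1) * (Real.log t * Real.exp (-t)) : ℝ) : ℂ) := by
    rw [setIntegral_congr_fun measurableSet_Ioi (fun t ht => cplx_eq_ofReal hx ht)]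
    exact integral_ofReal
  rw [h3, Complex.ofReal_re] at h2
  exact h2.congr_of_eventuallyEq (Eventually.of_forall fun y => rfl)

/-- The mean of the log-Erlang distribution: if `U ~ Erlang(k, λ)` then
`E[log U] = ∫ l · (1/Γ(k)) λ^k (exp l)^k exp(-λ exp l) dl = ψ(k) - log λ`. -/
theorem stmt8 (lam : ℝ) (hlam : 0 < lam) (k : ℕ) (hk : 0 < k) :
    (∫ l : ℝ, l * ((1 / Real.Gamma k) * lam ^ k * Real.exp l ^ k *
        Real.exp (-lam * Real.exp l)))
      = digamma k - Real.log lam := by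
  obtain ⟨m, rfl⟩ : ∃ m, k = m + 1 := ⟨k - 1, (Nat.succ_pred_eq_of_pos hk).symm⟩
  have hKpos : (0:ℝ) < ((m + 1 : ℕ) : ℝ) := by positivity
  have hΓpos : 0 < Real.Gamma ((m + 1 : ℕ) : ℝ) := Real.Gamma_pos_of_pos hKpos
  set G : ℝ → ℝ := fun x => (1 / Real.Gamma ((m + 1 : ℕ) : ℝ)) *
      ((Real.log x - Real.log lam) * (x ^ m * Real.exp (-x))) with hG
  have himg : (fun l : ℝ => lam * Real.exp l) '' univ = Ioi (0:ℝ) := by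
    ext x
    simp only [image_univ, mem_range, mem_Ioi]
    constructor
    · rintro ⟨l, rfl⟩; positivity
    · intro hx
      exact ⟨Real.log (x / lam), by
        rw [Real.exp_log (by positivity)]; field_simp⟩
  have hsub := integral_image_eq_integral_abs_deriv_smul (s := (univ : Set ℝ))
      (f := fun l => lam * Real.exp l) (f' := fun l => lam * Real.exp l)
      MeasurableSet.univ
      (fun l _ => ((Real.hasDerivAt_exp l).const_mul lam).hasDerivWithinAt)
      (fun a _ b _ hab => Real.exp_injective (mul_left_cancel₀ hlam.ne' hab))
      G
  rw [himg, setIntegral_univ] at hsub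
  have hLHS : (∫ l : ℝ, l * ((1 / Real.Gamma ((m+1:ℕ):ℝ)) * lam ^ (m+1) *
        Real.exp l ^ (m+1) * Real.exp (-lam * Real.exp l)))
      = ∫ x in Ioi (0:ℝ), G x := by
    rw [hsub]
    refine integral_congr_ae (Eventually.of_forall fun l => ?_)
    have he : (0:ℝ) < lam * Real.exp l := by positivity
    dsimp only
    rw [smul_eq_mul, abs_of_pos he, hG]
    simp only [Real.log_mul hlam.ne' (Real.exp_ne_zero l), Real.log_exp]
    rw [show -(lam * Real.exp l) = -lam * Real.exp l by ring]
    ring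
  have hI1 : IntegrableOn (fun x : ℝ => Real.log x * (x ^ m * Real.exp (-x))) (Ioi 0) := by
    refine IntegrableOn.congr_fun (realLogGammaIntegrable hKpos) (fun t ht => ?_) measurableSet_Ioi
    rw [show ((m+1:ℕ):ℝ) - 1 = ((m:ℕ):ℝ) by push_cast; ring, Real.rpow_natCast]
    ring
  have hI2 : IntegrableOn (fun x : ℝ => x ^ m * Real.exp (-x)) (Ioi 0) := by
    refine IntegrableOn.congr_fun (Real.GammaIntegral_convergent hKpos)
      (fun t ht => ?_) measurableSet_Ioi
    rw [show ((m+1:ℕ):ℝ) - 1 = ((m:ℕ):ℝ) by push_cast; ring, Real.rpow_natCast]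
    ring
  have hderiv : deriv Real.Gamma ((m+1:ℕ):ℝ)
      = ∫ x in Ioi (0:ℝ), Real.log x * (x ^ m * Real.exp (-x)) := by
    rw [(hasDerivAt_realGamma hKpos).deriv]
    refine setIntegral_congr_fun measurableSet_Ioi (fun t ht => ?_)
    rw [show ((m+1:ℕ):ℝ) - 1 = ((m:ℕ):ℝ) by push_cast; ring, Real.rpow_natCast]
    ring
  have hGam : Real.Gamma ((m+1:ℕ):ℝ) = ∫ x in Ioi (0:ℝ), x ^ m * Real.exp (-x) := by
    rw [Real.Gamma_eq_integral hKpos]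
    refine setIntegral_congr_fun measurableSet_Ioi (fun t ht => ?_)
    rw [show ((m+1:ℕ):ℝ) - 1 = ((m:ℕ):ℝ) by push_cast; ring, Real.rpow_natCast]
    ring
  rw [hLHS]
  have hsplit : (∫ x in Ioi (0:ℝ), G x)
      = (1 / Real.Gamma ((m+1:ℕ):ℝ)) *
          (∫ x in Ioi (0:ℝ), Real.log x * (x ^ m * Real.exp (-x)))
        - ((1 / Real.Gamma ((m+1:ℕ):ℝ)) * Real.log lam) *
          (∫ x in Ioi (0:ℝ), x ^ m * Real.exp (-x)) := by
    rw [← integral_const_mul, ← integral_const_mul, ← integral_sub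
      (hI1.const_mul _) (hI2.const_mul _)]
    refine setIntegral_congr_fun measurableSet_Ioi (fun t ht => ?_)
    rw [hG]; ring
  rw [hsplit, ← hderiv, ← hGam, digamma]
  field_simp
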